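/- Let k : ℝ → ℝ be continuous and nonnegative with k(0) > 0, and suppose K = max over x ∈ [0,1] of ∫₀¹ k(|x−y|) dy satisfies K ≤ 1. Then every continuous solution z : [0,1] → [0,1] of the equilibrium equation z(x) = (1 − z(x)) · ∫₀¹ z(y) k(|x−y|) dy is identically zero, i.e. z(x) = 0 for all x ∈ [0,1]. -/
import Mathlib


open Set

/-- The kernel-weighted integral operator `χ[z](x) = ∫₀¹ z(y) k(|x−y|) dy`. -/
noncomputable def chi (k z : ℝ → ℝ) (x : ℝ) : ℝ := ∫ y in (0:ℝ)..1, z y * k |x - y|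

/-- If `K = max_{x ∈ [0,1]} ∫₀¹ k(|x−y|) dy ≤ 1`, then every continuous
solution `z : [0,1] → [0,1]` of the equilibrium equation is identically zero. -/
theorem no_nontrivial_solution_of_K_le_one (k z : ℝ → ℝ) (K : ℝ)
    (hk_cont : Continuous k) (hk_nonneg : ∀ r, 0 ≤ k r) (hk0 : 0 < k 0)
    (hK : IsGreatest ((fun x => ∫ y in (0:ℝ)..1, k |x - y|) '' Icc 0 1) K)
    (hK_le : K ≤ 1)
    (hz_cont : ContinuousOn z (Icc 0 1))
    (hz_mem : ∀ x ∈ Icc (0:ℝ) 1, z x ∈ Icc (0:ℝ) 1)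
    (hz_eq : ∀ x ∈ Icc (0:ℝ) 1, z x = (1 - z x) * chi k z x) :
    ∀ x ∈ Icc (0:ℝ) 1, z x = 0 := by
  obtain ⟨x₀, hx₀, hmax⟩ := (isCompact_Icc (a := (0:ℝ)) (b := 1)).exists_isMaxOn
    (Set.nonempty_Icc.2 zero_le_one) hz_cont
  set M := z x₀ with hMdef
  have hM01 := hz_mem x₀ hx₀
  intro x hx
  by_contra hxne
  have hxpos : 0 < z x := lt_of_le_of_ne (hz_mem x hx).1 (Ne.symm hxne)
  have hMpos : 0 < M := lt_of_lt_of_le hxpos (hmax hx)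
  -- integrability
  have huIcc : Set.uIcc (0:ℝ) 1 = Icc 0 1 := Set.uIcc_of_le zero_le_one
  have hkc : Continuous fun y : ℝ => k |x₀ - y| :=
    hk_cont.comp ((continuous_const.sub continuous_id).abs)
  have hint1 : IntervalIntegrable (fun y => z y * k |x₀ - y|) MeasureTheory.volume 0 1 := by
    apply ContinuousOn.intervalIntegrable
    rw [huIcc]
    exact hz_cont.mul hkc.continuousOn
  have hint2 : IntervalIntegrable (fun y => M * k |x₀ - y|) MeasureTheory.volume 0 1 :=
    (continuous_const.mul hkc).intervalIntegrable 0 1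
  have hle : chi k z x₀ ≤ M * K := by
    have h1 : chi k z x₀ ≤ ∫ y in (0:ℝ)..1, M * k |x₀ - y| := by
      apply intervalIntegral.integral_mono_on zero_le_one hint1 hint2
      intro y hy
      exact mul_le_mul_of_nonneg_right (hmax hy) (hk_nonneg _)
    have h2 : (∫ y in (0:ℝ)..1, M * k |x₀ - y|) = M * ∫ y in (0:ℝ)..1, k |x₀ - y| := by
      rw [intervalIntegral.integral_const_mul]
    have h3 : (∫ y in (0:ℝ)..1, k |x₀ - y|) ≤ K := hK.2 ⟨x₀, hx₀, rfl⟩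
    calc chi k z x₀ ≤ M * ∫ y in (0:ℝ)..1, k |x₀ - y| := by rw [← h2]; exact h1
      _ ≤ M * K := mul_le_mul_of_nonneg_left h3 hMpos.le
  have heq : M = (1 - M) * chi k z x₀ := hz_eq x₀ hx₀
  nlinarith [mul_le_mul_of_nonneg_left hle (sub_nonneg.2 hM01.2),
    mul_nonneg (sub_nonneg.2 hM01.2) hMpos.le, sq_nonneg M]
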